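/- Let B be a strictly increasing continuous CDF with values in (0,1), g a probability density with full support, p ∈ ℝ, b_L < 0 ≤ b_R, and define τ(b_L,b_R) = (∫_{−b_R}^{−b_L} B(−p−γ−b_R) g(γ) dγ) / (∫_{−b_R}^{−b_L} B(−p+γ+b_L) g(γ) dγ) for b_R > b_L. Then lim_{b_R → b_L⁺} τ(b_L, b_R) = 1, and τ(b_L, b_R) < B(−p)/B(−p + b_L − b_R) for all b_R > b_L. -/
import Mathlib


open MeasureTheory Set intervalIntegral Filter

/-- The ratio τ(b_L,b_R) tends to 1 as b_R → b_L⁺ (L'Hôpital), and is bounded above by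
B(−p)/B(−p+b_L−b_R). -/
theorem stmt_19 (B g : ℝ → ℝ) (hBm : StrictMono B) (hBc : Continuous B)
    (hB01 : ∀ x, 0 < B x ∧ B x < 1)
    (hgc : Continuous g) (hgpos : ∀ x, 0 < g x) (hg1 : ∫ x, g x = 1)
    (p bL : ℝ) (hbL : bL < 0) :
    Tendsto (fun bR : ℝ =>
        (∫ γ in (-bR)..(-bL), B (-p - γ - bR) * g γ) /
          (∫ γ in (-bR)..(-bL), B (-p + γ + bL) * g γ))
      (nhdsWithin bL (Ioi bL)) (nhds 1) ∧
    ∀ bR : ℝ, bL < bR →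
      (∫ γ in (-bR)..(-bL), B (-p - γ - bR) * g γ) /
          (∫ γ in (-bR)..(-bL), B (-p + γ + bL) * g γ) <
        B (-p) / B (-p + bL - bR) := by
  -- Notation
  set N : ℝ → ℝ := fun bR => ∫ γ in (-bR)..(-bL), B (-p - γ - bR) * g γ with hN
  set D : ℝ → ℝ := fun bR => ∫ γ in (-bR)..(-bL), B (-p + γ + bL) * g γ with hD
  have hCpos : 0 < B (-p) := (hB01 (-p)).1
  -- Key bounds for every bR > bL
  have key : ∀ bR : ℝ, bL < bR →
      0 < D bR ∧
      B (-p + bL - bR) / B (-p) ≤ N bR / D bR ∧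
      N bR / D bR < B (-p) / B (-p + bL - bR) := by
    intro bR hbR
    have hab : (-bR) < -bL := by linarith
    have hcpos : 0 < B (-p + bL - bR) := (hB01 _).1
    set c := B (-p + bL - bR) with hc
    set C := B (-p) with hC
    set G := ∫ γ in (-bR)..(-bL), g γ with hG
    have hGpos : 0 < G :=
      intervalIntegral_pos_of_pos (hgc.intervalIntegrable _ _) hgpos hab
    have hint1 : IntervalIntegrable (fun γ => B (-p - γ - bR) * g γ) volume (-bR) (-bL) :=
      (((hBc.comp (by fun_prop : Continuous fun γ : ℝ => -p - γ - bR))).mul hgc).intervalIntegrable _ _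
    have hint2 : IntervalIntegrable (fun γ => B (-p + γ + bL) * g γ) volume (-bR) (-bL) :=
      (((hBc.comp (by fun_prop : Continuous fun γ : ℝ => -p + γ + bL))).mul hgc).intervalIntegrable _ _
    have hintcg : ∀ k : ℝ, IntervalIntegrable (fun γ => k * g γ) volume (-bR) (-bL) :=
      fun k => ((continuous_const.mul hgc)).intervalIntegrable _ _
    have hCG : ∫ γ in (-bR)..(-bL), C * g γ = C * G := by
      rw [hG, intervalIntegral.integral_const_mul]
    have hcG : ∫ γ in (-bR)..(-bL), c * g γ = c * G := by
      rw [hG, intervalIntegral.integral_const_mul]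
    -- N ≤ C * G
    have h1 : N bR ≤ C * G := by
      rw [← hCG]
      apply intervalIntegral.integral_mono_on hab.le hint1 (hintcg C)
      intro x hx
      have : B (-p - x - bR) ≤ C := hBm.monotone (by linarith [hx.1])
      exact mul_le_mul_of_nonneg_right this (hgpos x).le
    -- c * G ≤ N
    have h2 : c * G ≤ N bR := by
      rw [← hcG]
      apply intervalIntegral.integral_mono_on hab.le (hintcg c) hint1
      intro x hx
      have : c ≤ B (-p - x - bR) := hBm.monotone (by linarith [hx.2])
      exact mul_le_mul_of_nonneg_right this (hgpos x).le
    -- D ≤ C * G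
    have h3 : D bR ≤ C * G := by
      rw [← hCG]
      apply intervalIntegral.integral_mono_on hab.le hint2 (hintcg C)
      intro x hx
      have : B (-p + x + bL) ≤ C := hBm.monotone (by linarith [hx.2])
      exact mul_le_mul_of_nonneg_right this (hgpos x).le
    -- c * G < D (strict)
    have h4 : c * G < D bR := by
      rw [← hcG]
      apply intervalIntegral.integral_lt_integral_of_continuousOn_of_le_of_exists_lt hab
        (continuous_const.mul hgc).continuousOn
        ((hBc.comp (by fun_prop : Continuous fun γ : ℝ => -p + γ + bL)).mul hgc).continuousOn
      · intro x hx
        have : c ≤ B (-p + x + bL) := hBm.monotone (by linarith [hx.1.le])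
        exact mul_le_mul_of_nonneg_right this (hgpos x).le
      · refine ⟨-bL, ⟨hab.le, le_refl _⟩, ?_⟩
        have : c < B (-p + -bL + bL) := hBm (by linarith)
        exact mul_lt_mul_of_pos_right this (hgpos _)
    have hDpos : 0 < D bR := lt_trans (by positivity) h4
    refine ⟨hDpos, ?_, ?_⟩
    · rw [div_le_div_iff₀ hCpos hDpos]
      nlinarith [h2, h3, hcpos.le, hCpos.le]
    · rw [div_lt_div_iff₀ hDpos hcpos]
      nlinarith [h1, h4, hCpos, hcpos.le, hGpos.le]
  refine ⟨?_, fun bR hbR => (key bR hbR).2.2⟩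
  -- Squeeze
  have hev : ∀ᶠ bR in nhdsWithin bL (Ioi bL), bL < bR := eventually_mem_nhdsWithin
  have hlo : Tendsto (fun bR : ℝ => B (-p + bL - bR) / B (-p))
      (nhdsWithin bL (Ioi bL)) (nhds 1) := by
    have : ContinuousAt (fun bR : ℝ => B (-p + bL - bR) / B (-p)) bL := by
      apply ContinuousAt.div
      · exact (hBc.comp (by fun_prop : Continuous fun bR : ℝ => -p + bL - bR)).continuousAt
      · exact continuousAt_const
      · exact hCpos.ne'
    have h := this.continuousWithinAt.tendsto (s := Ioi bL)
    simpa [div_self hCpos.ne'] using h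
  have hhi : Tendsto (fun bR : ℝ => B (-p) / B (-p + bL - bR))
      (nhdsWithin bL (Ioi bL)) (nhds 1) := by
    have : ContinuousAt (fun bR : ℝ => B (-p) / B (-p + bL - bR)) bL := by
      apply ContinuousAt.div
      · exact continuousAt_const
      · exact (hBc.comp (by fun_prop : Continuous fun bR : ℝ => -p + bL - bR)).continuousAt
      · simpa using hCpos.ne'
    have h := this.continuousWithinAt.tendsto (s := Ioi bL)
    simpa [div_self hCpos.ne'] using h
  apply tendsto_of_tendsto_of_tendsto_of_le_of_le' hlo hhi
  · exact hev.mono fun bR h => (key bR h).2.1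
  · exact hev.mono fun bR h => (key bR h).2.2.le
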